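/- Let p be an odd prime and let a, t be p-integral rationals with t \not\equiv 0, 1 (mod p). Writing n = \langle a \rangle_p for the residue of a modulo p, we have \sum_{k=0}^{p-1} \binom{a}{k}^2 t^k \equiv (t-1)^n P_n((t+1)/(t-1)) (mod p), where P_n is the n-th Legendre polynomial. -/

import Mathlib

open Polynomial Finset

/-- The Legendre polynomials over `ℚ`, defined by the three-term recurrence
`P₀ = 1`, `P₁ = X`, `(n+2)·P_{n+2} = (2n+3)·X·P_{n+1} - (n+1)·P_n`. -/
noncomputable def legendreP : ℕ → Polynomial ℚ
  | 0 => 1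
  | 1 => X
  | n + 2 => C ((n + 2 : ℚ))⁻¹ *
      (C (2 * (n : ℚ) + 3) * X * legendreP (n + 1) - C ((n : ℚ) + 1) * legendreP n)

/-- The generalized binomial coefficient `a(a-1)⋯(a-k+1)/k!`. -/
def gchoose (a : ℚ) (k : ℕ) : ℚ :=
  (∏ i ∈ Finset.range k, (a - i)) / (Nat.factorial k)

/-- A rational number is `p`-integral if `p` does not divide its denominator. -/
def pInt (p : ℕ) (r : ℚ) : Prop := ¬ (p ∣ r.den)

/-- Congruence modulo `p` in the ring of `p`-integral rationals:
`r ≡ s (mod p)` iff `r - s = p·c` for some `p`-integral rational `c`. -/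
def pCong (p : ℕ) (r s : ℚ) : Prop := ∃ c : ℚ, pInt p c ∧ r - s = p * c

/-! ### Auxiliary material -/

section PIntLemmas

variable {p : ℕ}

lemma pInt_natCast (hp : p.Prime) (m : ℕ) : pInt p (m : ℚ) := by
  simp [pInt, Rat.den_natCast, hp.ne_one]

lemma pInt.add (hp : p.Prime) {r s : ℚ} (h1 : pInt p r) (h2 : pInt p s) : pInt p (r + s) := by
  intro h
  rcases (Nat.Prime.dvd_mul hp).mp (h.trans (Rat.add_den_dvd r s)) with h' | h' <;>
    [exact h1 h'; exact h2 h']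

lemma pInt.mul (hp : p.Prime) {r s : ℚ} (h1 : pInt p r) (h2 : pInt p s) : pInt p (r * s) := by
  intro h
  rcases (Nat.Prime.dvd_mul hp).mp (h.trans (Rat.mul_den_dvd r s)) with h' | h' <;>
    [exact h1 h'; exact h2 h']

lemma pInt.neg {r : ℚ} (h1 : pInt p r) : pInt p (-r) := by
  simpa [pInt, Rat.den_neg_eq_den] using h1

lemma pInt.sub (hp : p.Prime) {r s : ℚ} (h1 : pInt p r) (h2 : pInt p s) : pInt p (r - s) := by
  rw [sub_eq_add_neg]; exact h1.add hp h2.neg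

lemma pInt_inv_nat (m : ℕ) (hm : ¬ p ∣ m) : pInt p ((m : ℚ)⁻¹) := by
  have h0 : ((m:ℚ))⁻¹ = Rat.divInt (1 : ℤ) (m : ℤ) := by
    rw [Rat.divInt_eq_div]; push_cast; ring
  intro h
  apply hm
  rw [h0] at h
  have := Rat.den_dvd (1 : ℤ) (m : ℤ)
  exact_mod_cast dvd_trans (Int.natCast_dvd_natCast.mpr h) this

lemma pInt.pow (hp : p.Prime) {r : ℚ} (h1 : pInt p r) (k : ℕ) : pInt p (r ^ k) := by
  induction k with
  | zero => simpa using pInt_natCast hp 1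
  | succ k ih => rw [pow_succ]; exact ih.mul hp h1

lemma pCong.refl (hp : p.Prime) (r : ℚ) : pCong p r r :=
  ⟨0, by simpa using pInt_natCast hp 0, by ring⟩

lemma pCong.symm {r s : ℚ} (h : pCong p r s) : pCong p s r := by
  obtain ⟨c, hc, he⟩ := h
  exact ⟨-c, hc.neg, by rw [← neg_sub, he]; ring⟩

lemma pCong.trans (hp : p.Prime) {r s u : ℚ} (h : pCong p r s) (h' : pCong p s u) :
    pCong p r u := by
  obtain ⟨c, hc, he⟩ := h; obtain ⟨c', hc', he'⟩ := h'
  exact ⟨c + c', hc.add hp hc', by rw [mul_add, ← he, ← he']; ring⟩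

lemma pCong.pInt_left (hp : p.Prime) {r s : ℚ} (h : pCong p r s) (hs : pInt p s) : pInt p r := by
  obtain ⟨c, hc, he⟩ := h
  have : r = s + p * c := by linarith [he]
  rw [this]; exact hs.add hp (((pInt_natCast hp p).mul hp) hc)

lemma pCong.add (hp : p.Prime) {r s u v : ℚ} (h : pCong p r s) (h' : pCong p u v) :
    pCong p (r + u) (s + v) := by
  obtain ⟨c, hc, he⟩ := h; obtain ⟨c', hc', he'⟩ := h'
  exact ⟨c + c', hc.add hp hc', by rw [mul_add, ← he, ← he']; ring⟩

lemma pCong.mul (hp : p.Prime) {r s u v : ℚ} (h : pCong p r s) (h' : pCong p u v)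
    (hs : pInt p s) (hu : pInt p u) : pCong p (r * u) (s * v) := by
  obtain ⟨c, hc, he⟩ := h; obtain ⟨c', hc', he'⟩ := h'
  refine ⟨c * u + s * c', (hc.mul hp hu).add hp (hs.mul hp hc'), ?_⟩
  have : r * u - s * v = (r - s) * u + s * (u - v) := by ring
  rw [this, he, he']; ring

lemma pCong.div_nat (hp : p.Prime) {r s : ℚ} (m : ℕ) (h : pCong p r s) (hm : ¬ p ∣ m) :
    pCong p (r / m) (s / m) := by
  obtain ⟨c, hc, he⟩ := h
  refine ⟨c / m, hc.mul hp (pInt_inv_nat m hm), ?_⟩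
  rw [div_sub_div_same, he]; ring

lemma pCong.sum (hp : p.Prime) {ι : Type*} (s : Finset ι) {f g : ι → ℚ}
    (h : ∀ i ∈ s, pCong p (f i) (g i)) :
    pCong p (∑ i ∈ s, f i) (∑ i ∈ s, g i) := by
  classical
  induction s using Finset.induction with
  | empty => simpa using pCong.refl hp 0
  | insert _ _ hx ih =>
    rw [Finset.sum_insert hx, Finset.sum_insert hx]
    exact (h _ (Finset.mem_insert_self _ _)).add hp
      (ih fun i hi => h i (Finset.mem_insert_of_mem hi))

lemma prod_cast_desc (n k : ℕ) :
    (∏ i ∈ Finset.range k, ((n : ℚ) - i)) = (n.descFactorial k : ℚ) := by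
  by_cases h : k ≤ n
  · rw [Nat.descFactorial_eq_prod_range]
    push_cast
    refine Finset.prod_congr rfl fun i hi => ?_
    rw [Nat.cast_sub]
    exact le_of_lt (lt_of_lt_of_le (Finset.mem_range.mp hi) h)
  · push_neg at h
    rw [Nat.descFactorial_eq_zero_iff_lt.mpr h]
    rw [Finset.prod_eq_zero (Finset.mem_range.mpr h) (by simp)]
    simp

lemma gchoose_natCast (n k : ℕ) : gchoose (n : ℚ) k = (n.choose k : ℚ) := by
  rw [gchoose, prod_cast_desc, Nat.choose_eq_descFactorial_div_factorial,
    Nat.cast_div (Nat.factorial_dvd_descFactorial n k) (by positivity)]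

lemma pCong.prod_sub (hp : p.Prime) {a : ℚ} (n : ℕ) (ha : pInt p a) (han : pCong p a n) (k : ℕ) :
    pCong p (∏ i ∈ Finset.range k, (a - i)) (∏ i ∈ Finset.range k, ((n:ℚ) - i)) := by
  induction k with
  | zero => simpa using pCong.refl hp 1
  | succ k ih =>
    rw [Finset.prod_range_succ, Finset.prod_range_succ]
    refine ih.mul hp ?_ ?_ ((ha.sub hp (pInt_natCast hp k)))
    · obtain ⟨c, hc, he⟩ := han
      exact ⟨c, hc, by rw [← he]; ring⟩
    · exact Finset.prod_induction _ _ (fun _ _ h1 h2 => h1.mul hp h2)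
        (by simpa using pInt_natCast hp 1)
        (fun i _ => (pInt_natCast hp n).sub hp (pInt_natCast hp i))

lemma pCong_gchoose (hp : p.Prime) {a : ℚ} {n k : ℕ} (ha : pInt p a) (han : pCong p a n)
    (hk : k < p) : pCong p (gchoose a k) ((n.choose k : ℚ)) := by
  have h1 := (pCong.prod_sub hp n ha han k).div_nat hp (Nat.factorial k)
    (by rw [hp.dvd_factorial]; omega)
  rw [show (∏ i ∈ Finset.range k, ((n:ℚ) - i)) / (Nat.factorial k) = gchoose (n:ℚ) k from rfl,
    gchoose_natCast] at h1
  exact h1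

end PIntLemmas

lemma choose_rel (n j : ℕ) (h : j < n) :
    ((n.choose (j+1) : ℚ)) * (j+1) = (n.choose j : ℚ) * ((n : ℚ) - j) := by
  have hc : ((n.choose (j+1) * (j+1) : ℕ) : ℚ) = ((n.choose j * (n - j) : ℕ) : ℚ) := by
    rw [Nat.choose_succ_right_eq]
  push_cast [Nat.cast_sub h.le] at hc
  linarith

lemma key' (n j : ℕ) :
    (n : ℚ) * (n.choose (j+1) : ℚ)^2 =
      (n.choose (j+1) : ℚ) * ((n.choose (j+2) : ℚ) + (n.choose j : ℚ)) +
      ((n : ℚ) + 2) * (n.choose (j+2) : ℚ) * (n.choose j : ℚ) := by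
  rcases lt_or_ge j n with hjn | hjn
  · rcases lt_or_ge (j+1) n with hj1 | hj1
    · have r1 := choose_rel n j hjn
      have r2 := choose_rel n (j+1) hj1
      obtain ⟨m, hm, rfl⟩ : ∃ m, 2 ≤ m ∧ n = j + m := ⟨n - j, by omega, by omega⟩
      have hj1ne : ((j:ℚ)+1) ≠ 0 := by positivity
      have hj2ne : ((j:ℚ)+2) ≠ 0 := by positivity
      have e1 : ((j+m).choose (j+1) : ℚ) = ((j+m).choose j : ℚ) * ((m:ℚ)) / ((j:ℚ)+1) := by
        push_cast at r1 ⊢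
        field_simp
        linarith
      have e2 : ((j+m).choose (j+2) : ℚ) = ((j+m).choose (j+1) : ℚ) * ((m:ℚ)-1) / ((j:ℚ)+2) := by
        push_cast at r2 ⊢
        field_simp
        linarith
      rw [e2, e1]
      push_cast
      field_simp
      ring
    · have hn : n = j + 1 := by omega
      subst hn
      simp [Nat.choose_self, Nat.choose_eq_zero_of_lt (by omega : j+1 < j+2),
        Nat.choose_succ_self_right]
  · rw [Nat.choose_eq_zero_of_lt (by omega), Nat.choose_eq_zero_of_lt (by omega)]
    push_cast
    ring

/-- Shift of a coefficient sequence. -/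
def sh (g : ℕ → ℚ) : ℕ → ℚ
  | 0 => 0
  | (k+1) => g k

/-- Partial sums `∑_{k<N} C(m,k)² tᵏ`. -/
noncomputable def Sf (m N : ℕ) (t : ℚ) : ℚ := ∑ k ∈ range N, ((m.choose k : ℚ))^2 * t^k

lemma shift (g : ℕ → ℚ) (N : ℕ) (t : ℚ) :
    t * ∑ k ∈ range N, g k * t^k = ∑ k ∈ range (N+1), sh g k * t^k := by
  rw [Finset.sum_range_succ']
  simp only [sh]
  rw [Finset.mul_sum]
  simp only [pow_zero, mul_zero, zero_mul, add_zero]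
  exact Finset.sum_congr rfl fun k _ => by ring

lemma sum_pad (g : ℕ → ℚ) (N N' : ℕ) (t : ℚ) (h2 : N ≤ N') (hg : ∀ k, N ≤ k → g k = 0) :
    ∑ k ∈ range N, g k * t^k = ∑ k ∈ range N', g k * t^k := by
  refine Finset.sum_subset (Finset.range_subset_range.mpr h2) fun k hk hnk => ?_
  rw [hg k (by simpa using hnk)]
  ring

lemma frec (n : ℕ) (t : ℚ) :
    ((n:ℚ)+2) * Sf (n+2) (n+3) t
      = (2*(n:ℚ)+3) * ((t+1) * Sf (n+1) (n+2) t)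
        - ((n:ℚ)+1) * ((t-1)^2 * Sf n (n+1) t) := by
  set g0 : ℕ → ℚ := fun k => ((n.choose k : ℚ))^2 with hg0
  set g1 : ℕ → ℚ := fun k => (((n+1).choose k : ℚ))^2 with hg1
  set g2 : ℕ → ℚ := fun k => (((n+2).choose k : ℚ))^2 with hg2
  have hs1 : t * ∑ k ∈ range (n+2), g1 k * t^k = ∑ k ∈ range (n+3), sh g1 k * t^k :=
    shift g1 (n+2) t
  have hs0 : t * ∑ k ∈ range (n+1), g0 k * t^k = ∑ k ∈ range (n+2), sh g0 k * t^k :=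
    shift g0 (n+1) t
  have hs0' : t * ∑ k ∈ range (n+2), sh g0 k * t^k = ∑ k ∈ range (n+3), sh (sh g0) k * t^k :=
    shift (sh g0) (n+2) t
  have hp1 : ∑ k ∈ range (n+2), g1 k * t^k = ∑ k ∈ range (n+3), g1 k * t^k :=
    sum_pad g1 (n+2) (n+3) t (by omega) (fun k hk => by
      simp only [hg1]
      rw [Nat.choose_eq_zero_of_lt (by omega)]; simp)
  have hp0 : ∑ k ∈ range (n+1), g0 k * t^k = ∑ k ∈ range (n+3), g0 k * t^k :=
    sum_pad g0 (n+1) (n+3) t (by omega) (fun k hk => by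
      simp only [hg0]
      rw [Nat.choose_eq_zero_of_lt (by omega)]; simp)
  have hp0s : ∑ k ∈ range (n+2), sh g0 k * t^k = ∑ k ∈ range (n+3), sh g0 k * t^k :=
    sum_pad (sh g0) (n+2) (n+3) t (by omega) (fun k hk => by
      match k, hk with
      | (k+1), hk =>
        simp only [sh, hg0]
        rw [Nat.choose_eq_zero_of_lt (by omega)]; simp)
  have key_pt : ∀ k ∈ range (n+3), ((n:ℚ)+2) * (g2 k * t^k) =
      (2*(n:ℚ)+3) * (sh g1 k * t^k + g1 k * t^k)
        - ((n:ℚ)+1) * (sh (sh g0) k * t^k - 2 * (sh g0 k * t^k) + g0 k * t^k) := by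
    intro k _
    match k with
    | 0 =>
      simp only [sh, hg0, hg1, hg2, Nat.choose_zero_right]
      push_cast; ring
    | 1 =>
      simp only [sh, hg0, hg1, hg2, Nat.choose_one_right, Nat.choose_zero_right]
      push_cast; ring
    | (j+2) =>
      simp only [sh, hg0, hg1, hg2]
      push_cast [Nat.choose_succ_succ]
      linear_combination (-2 * t^(j+2)) * key' n j
  calc ((n:ℚ)+2) * Sf (n+2) (n+3) t
      = ∑ k ∈ range (n+3), ((n:ℚ)+2) * (g2 k * t^k) := by
        rw [Sf, Finset.mul_sum]
    _ = ∑ k ∈ range (n+3), ((2*(n:ℚ)+3) * (sh g1 k * t^k + g1 k * t^k)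
        - ((n:ℚ)+1) * (sh (sh g0) k * t^k - 2 * (sh g0 k * t^k) + g0 k * t^k)) :=
        Finset.sum_congr rfl key_pt
    _ = (2*(n:ℚ)+3) * ((∑ k ∈ range (n+3), sh g1 k * t^k) + ∑ k ∈ range (n+3), g1 k * t^k)
        - ((n:ℚ)+1) * ((∑ k ∈ range (n+3), sh (sh g0) k * t^k)
          - 2 * (∑ k ∈ range (n+3), sh g0 k * t^k) + ∑ k ∈ range (n+3), g0 k * t^k) := by
        simp only [Finset.sum_sub_distrib, Finset.sum_add_distrib, ← Finset.mul_sum]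
    _ = (2*(n:ℚ)+3) * ((t+1) * Sf (n+1) (n+2) t) - ((n:ℚ)+1) * ((t-1)^2 * Sf n (n+1) t) := by
        rw [← hs1, ← hs0', ← hp1, ← hp0s, ← hs0, ← hp0]
        rw [Sf, Sf]
        ring

lemma legendre_eval (t : ℚ) (ht : t ≠ 1) (n : ℕ) :
    (t-1)^n * (legendreP n).eval ((t+1)/(t-1)) = Sf n (n+1) t := by
  have hd : t - 1 ≠ 0 := sub_ne_zero.mpr ht
  suffices h : ∀ m : ℕ, (t-1)^m * (legendreP m).eval ((t+1)/(t-1)) = Sf m (m+1) t ∧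
      (t-1)^(m+1) * (legendreP (m+1)).eval ((t+1)/(t-1)) = Sf (m+1) (m+2) t from (h n).1
  intro m
  induction m with
  | zero =>
    constructor
    · simp [legendreP, Sf]
    · simp [legendreP, Sf, Finset.sum_range_succ]
      field_simp
      ring
  | succ m ih =>
    obtain ⟨h1, h2⟩ := ih
    refine ⟨h2, ?_⟩
    show (t-1)^(m+2) * (legendreP (m+2)).eval ((t+1)/(t-1)) = Sf (m+2) (m+3) t
    rw [legendreP]
    simp only [eval_mul, eval_sub, eval_C, eval_X]
    have hne : ((m:ℚ)+2) ≠ 0 := by positivity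
    apply mul_left_cancel₀ hne
    rw [show ((m:ℚ)+2) * Sf (m+2) (m+3) t
        = (2*(m:ℚ)+3) * ((t+1) * Sf (m+1) (m+2) t)
          - ((m:ℚ)+1) * ((t-1)^2 * Sf m (m+1) t) from frec m t, ← h2, ← h1]
    field_simp
    ring

theorem sum_gchoose_sq_legendre_congr (p : ℕ) (hp : p.Prime) (hodd : Odd p)
    (a t : ℚ) (ha : pInt p a) (ht : pInt p t)
    (ht0 : ¬ pCong p t 0) (ht1 : ¬ pCong p t 1)
    (n : ℕ) (hn : n < p) (han : pCong p a n) :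
    pCong p (∑ k ∈ Finset.range p, gchoose a k ^ 2 * t ^ k)
      ((t - 1) ^ n * (legendreP n).eval ((t + 1) / (t - 1))) := by
  have hT : t ≠ 1 := by
    intro h
    exact ht1 ⟨0, by simpa using pInt_natCast hp 0, by rw [h]; ring⟩
  rw [legendre_eval t hT n]
  have step2 : Sf n (n+1) t = ∑ k ∈ Finset.range p, ((n.choose k : ℚ))^2 * t^k := by
    rw [Sf]
    exact sum_pad _ (n+1) p t (by omega) (fun k hk => by
      rw [Nat.choose_eq_zero_of_lt (by omega)]; simp)
  rw [step2]
  refine pCong.sum hp _ fun k hk => ?_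
  have hg := pCong_gchoose hp ha han (Finset.mem_range.mp hk)
  have hCint := pInt_natCast hp (n.choose k)
  have hgint := hg.pInt_left hp hCint
  have hsq : pCong p (gchoose a k ^ 2) (((n.choose k : ℚ))^2) := by
    rw [pow_two, pow_two]
    exact hg.mul hp hg hCint hgint
  exact hsq.mul hp (pCong.refl hp (t^k)) (hCint.pow hp 2) (ht.pow hp k)
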